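/- Let Q be a left Bol loop, σ an automorphism of G = LMlt(Q) with L_x^σ = L_x^{-1} for all x, and K a proper normal subloop of Q. Then K = N(1) (the orbit of 1 under N) for some σ-invariant normal subgroup N of G; specifically N = M ∩ M^σ where M = {g ∈ G : g(yK) = yK for all y ∈ Q}. -/
import Mathlib


/-- With `Q` a left Bol loop, `σ` an automorphism of `G = LMlt(Q)` inverting all
left translations, and `K` a proper normal subloop of `Q`, one has `K = N(1)` (orbit of `1`)
for the `σ`-invariant normal subgroup `N = M ∩ M^σ`, where
`M = {g ∈ G | g(yK) = yK for all y}`. -/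
theorem stmt3 (Q : Type) [Mul Q] [One Q]
    (h1 : ∀ a : Q, 1 * a = a) (h2 : ∀ a : Q, a * 1 = a)
    (L : Q → Equiv.Perm Q) (hL : ∀ a x : Q, L a x = a * x)
    (R : Q → Equiv.Perm Q) (hR : ∀ a x : Q, R a x = x * a)
    (hBol : ∀ x y z : Q, x * (y * (x * z)) = (x * (y * x)) * z)
    (G : Subgroup (Equiv.Perm Q)) (hG : G = Subgroup.closure (Set.range L))
    (σ : G ≃* G)
    (hσ : ∀ (x : Q) (hx : L x ∈ G), σ ⟨L x, hx⟩ = (⟨L x, hx⟩ : G)⁻¹)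
    (K : Set Q)
    -- `K` is a subloop:
    (hK1 : (1 : Q) ∈ K)
    (hKm : ∀ a ∈ K, ∀ b ∈ K, a * b ∈ K)
    (hKld : ∀ a ∈ K, ∀ b ∈ K, (L a).symm b ∈ K)
    (hKrd : ∀ a ∈ K, ∀ b ∈ K, (R a).symm b ∈ K)
    -- `K` is normal: `x(yK) = (xy)K`, `(Kx)y = K(xy)`, `xK = Kx`:
    (hn1 : ∀ x y : Q, {z | ∃ k ∈ K, z = x * (y * k)} = {z | ∃ k ∈ K, z = (x * y) * k})
    (hn2 : ∀ x y : Q, {z | ∃ k ∈ K, z = (k * x) * y} = {z | ∃ k ∈ K, z = k * (x * y)})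
    (hn3 : ∀ x : Q, {z | ∃ k ∈ K, z = x * k} = {z | ∃ k ∈ K, z = k * x})
    -- `K` is proper:
    (hproper : K ≠ Set.univ) :
    ∃ N : Subgroup G, N.Normal ∧ Subgroup.map σ.toMonoidHom N = N ∧
      ((N : Set G) = {g : G |
          (∀ y : Q, (g : Equiv.Perm Q) '' {z | ∃ k ∈ K, z = y * k} = {z | ∃ k ∈ K, z = y * k}) ∧
          (∀ y : Q, ((σ g : G) : Equiv.Perm Q) '' {z | ∃ k ∈ K, z = y * k}
              = {z | ∃ k ∈ K, z = y * k})}) ∧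
      K = {q : Q | ∃ g ∈ N, ((g : G) : Equiv.Perm Q) 1 = q} := by

  subst hG
  -- notation: coset map
  set C : Q → Set Q := fun y => {z | ∃ k ∈ K, z = y * k} with hCdef
  have hC1 : C 1 = K := by
    ext z
    constructor
    · rintro ⟨k, hk, rfl⟩; rwa [h1]
    · intro hz; exact ⟨z, hz, (h1 z).symm⟩
  have hmemC : ∀ y, y ∈ C y := fun y => ⟨1, hK1, (h2 y).symm⟩
  have hKcoset : ∀ k ∈ K, C k = K := by
    intro k hk
    ext z
    constructor
    · rintro ⟨k', hk', rfl⟩; exact hKm k hk k' hk'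
    · intro hz
      refine ⟨(L k).symm z, hKld k hk z hz, ?_⟩
      rw [← hL, Equiv.apply_symm_apply]
  have hcoset_eq : ∀ y z, z ∈ C y → C z = C y := by
    rintro y z ⟨k₀, hk₀, rfl⟩
    have step1 : C (y * k₀) = {z | ∃ k ∈ K, z = y * (k₀ * k)} := (hn1 y k₀).symm
    rw [step1]
    ext w
    constructor
    · rintro ⟨k, hk, rfl⟩; exact ⟨k₀ * k, hKm k₀ hk₀ k hk, rfl⟩
    · rintro ⟨k', hk', rfl⟩
      have : k' ∈ C k₀ := (hKcoset k₀ hk₀).symm ▸ hk'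
      obtain ⟨k, hk, rfl⟩ := this
      exact ⟨k, hk, rfl⟩
  have hLimg : ∀ a y : Q, ⇑(L a) '' C y = C (a * y) := by
    intro a y
    have : ⇑(L a) '' C y = {z | ∃ k ∈ K, z = a * (y * k)} := by
      ext z
      constructor
      · rintro ⟨w, ⟨k, hk, rfl⟩, rfl⟩; exact ⟨k, hk, hL a _⟩
      · rintro ⟨k, hk, rfl⟩; exact ⟨y * k, ⟨k, hk, rfl⟩, hL a _⟩
    rw [this]; exact hn1 a y
  have hcancel : ∀ (p : Equiv.Perm Q) (S : Set Q), ⇑p⁻¹ '' (⇑p '' S) = S := by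
    intro p S
    rw [← Set.image_comp]
    have : ⇑p⁻¹ ∘ ⇑p = id := by funext a; simp
    rw [this, Set.image_id]
  have hcancel' : ∀ (p : Equiv.Perm Q) (S : Set Q), ⇑p '' (⇑p⁻¹ '' S) = S := by
    intro p S
    have := hcancel p⁻¹ S
    rwa [inv_inv] at this
  have hinv_img : ∀ (p : Equiv.Perm Q) (S : Set Q), ⇑p '' S = S → ⇑p⁻¹ '' S = S := by
    intro p S hS
    have h3 := hcancel p S
    rwa [hS] at h3
  -- every element of G permutes the cosets
  have hblocks : ∀ p : Equiv.Perm Q, p ∈ Subgroup.closure (Set.range L) →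
      ∀ y : Q, ∃ y' : Q, ⇑p '' C y = C y' := by
    intro p hp
    induction hp using Subgroup.closure_induction with
    | mem x hx =>
      obtain ⟨a, rfl⟩ := hx
      exact fun y => ⟨a * y, hLimg a y⟩
    | one => exact fun y => ⟨y, by simp⟩
    | mul x y hx hy ihx ihy =>
      intro w
      obtain ⟨w1, hw1⟩ := ihy w
      obtain ⟨w2, hw2⟩ := ihx w1
      exact ⟨w2, by rw [Equiv.Perm.coe_mul, Set.image_comp, hw1, hw2]⟩
    | inv x hx ihx =>
      intro y
      obtain ⟨y', hy'⟩ := ihx (x.symm y)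
      have hyy : y ∈ C y' := by
        rw [← hy']
        exact ⟨x.symm y, hmemC _, Equiv.apply_symm_apply x y⟩
      rw [← hcoset_eq y' y hyy] at hy'
      refine ⟨x.symm y, ?_⟩
      have h3 := hcancel x (C (x.symm y))
      rwa [hy'] at h3
  -- the subgroup M of coset-stabilizing elements
  set M : Subgroup (Subgroup.closure (Set.range L)) :=
    { carrier := {g | ∀ y : Q, ⇑(g : Equiv.Perm Q) '' C y = C y}
      one_mem' := by intro y; simp
      mul_mem' := by
        intro a b ha hb y
        have e : ((↑(a * b) : Equiv.Perm Q)) = (a : Equiv.Perm Q) * (b : Equiv.Perm Q) := rfl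
        rw [e, Equiv.Perm.coe_mul, Set.image_comp, hb y, ha y]
      inv_mem' := by
        intro a ha y
        have e : ((↑(a⁻¹) : Equiv.Perm Q)) = (a : Equiv.Perm Q)⁻¹ := rfl
        rw [e]
        exact hinv_img _ _ (ha y) } with hMdef
  have hMmem : ∀ g : Subgroup.closure (Set.range L),
      g ∈ M ↔ ∀ y : Q, ⇑(g : Equiv.Perm Q) '' C y = C y := fun g => Iff.rfl
  have hMnormal : M.Normal := by
    constructor
    intro n hn g y
    obtain ⟨y', hy'⟩ := hblocks ((g : Equiv.Perm Q)⁻¹) (inv_mem g.2) y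
    have e1 : ((↑(g * n * g⁻¹) : Equiv.Perm Q))
        = (g : Equiv.Perm Q) * (n : Equiv.Perm Q) * (g : Equiv.Perm Q)⁻¹ := rfl
    rw [e1, Equiv.Perm.coe_mul, Set.image_comp, Equiv.Perm.coe_mul, Set.image_comp]
    rw [hy', hn y', hy'.symm, hcancel']
  -- σ is an involution
  have hσ2 : ∀ g : Subgroup.closure (Set.range L), σ (σ g) = g := by
    intro g
    obtain ⟨p, hp⟩ := g
    induction hp using Subgroup.closure_induction with
    | mem x hx =>
      obtain ⟨a, rfl⟩ := hx
      have hmem : L a ∈ Subgroup.closure (Set.range L) :=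
        Subgroup.subset_closure (Set.mem_range_self a)
      rw [hσ a hmem, map_inv, hσ a hmem, inv_inv]
    | one =>
      show σ (σ 1) = 1
      rw [map_one, map_one]
    | mul x y hx hy ihx ihy =>
      show σ (σ ((⟨x, hx⟩ : Subgroup.closure (Set.range L)) * ⟨y, hy⟩)) = ⟨x, hx⟩ * ⟨y, hy⟩
      rw [map_mul, map_mul, ihx, ihy]
    | inv x hx ihx =>
      show σ (σ ((⟨x, hx⟩ : Subgroup.closure (Set.range L))⁻¹)) = (⟨x, hx⟩ : _)⁻¹
      rw [map_inv, map_inv, ihx]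
  refine ⟨M ⊓ Subgroup.comap σ.toMonoidHom M, ?_, ?_, ?_, ?_⟩
  · -- normality
    constructor
    intro n hn g
    rw [Subgroup.mem_inf] at hn ⊢
    refine ⟨hMnormal.conj_mem n hn.1 g, ?_⟩
    rw [Subgroup.mem_comap]
    show σ (g * n * g⁻¹) ∈ M
    rw [map_mul, map_mul, map_inv]
    exact hMnormal.conj_mem (σ n) hn.2 (σ g)
  · -- σ-invariance
    ext g
    simp only [Subgroup.mem_map, Subgroup.mem_inf, Subgroup.mem_comap]
    constructor
    · rintro ⟨h, ⟨hh1, hh2⟩, rfl⟩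
      refine ⟨hh2, ?_⟩
      show σ (σ.toMonoidHom h) ∈ M
      rw [show (σ.toMonoidHom h : _) = σ h from rfl, hσ2 h]
      exact hh1
    · rintro ⟨hg1, hg2⟩
      exact ⟨σ g, ⟨hg2, by show σ (σ g) ∈ M; rw [hσ2 g]; exact hg1⟩, hσ2 g⟩
  · -- carrier description
    ext g
    simp only [SetLike.mem_coe, Subgroup.mem_inf, Subgroup.mem_comap, Set.mem_setOf_eq]
    exact Iff.rfl
  · -- K is the orbit of 1
    ext q
    simp only [Set.mem_setOf_eq]
    constructor
    · intro hq
      have hLq : L q ∈ Subgroup.closure (Set.range L) :=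
        Subgroup.subset_closure (Set.mem_range_self q)
      have hM : (⟨L q, hLq⟩ : Subgroup.closure (Set.range L)) ∈ M := by
        rw [hMmem]
        intro y
        have h1' : ⇑(L q) '' C y = C (q * y) := hLimg q y
        have h2' : q * y ∈ C y := by
          show q * y ∈ {z | ∃ k ∈ K, z = y * k}
          rw [hn3 y]
          exact ⟨q, hq, rfl⟩
        have := hcoset_eq y (q * y) h2'
        rw [h1', this]
      refine ⟨⟨L q, hLq⟩, ⟨hM, ?_⟩, ?_⟩
      · show σ ⟨L q, hLq⟩ ∈ M
        rw [hσ q hLq]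
        exact M.inv_mem hM
      · show L q 1 = q
        rw [hL, h2]
    · rintro ⟨g, ⟨hg, _⟩, rfl⟩
      have hg' : ∀ y : Q, ⇑(g : Equiv.Perm Q) '' C y = C y := hg
      have := hg' 1
      rw [hC1] at this
      rw [← this]
      exact ⟨1, hK1, rfl⟩
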